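/- Let A be a block matrix [[B, C], [0, D]] with nonnegative blocks, where C is a matrix unit (exactly one nonzero entry). If rank_+(B|C) = rank_+(B) + 1, then rank_+(A) = rank_+(B) + rank_+([[C],[D]]), where [[C],[D]] is the vertical concatenation of C and D. -/

import Mathlib

noncomputable def nnRank {α β : Type} [Fintype α] [Fintype β] (A : Matrix α β ℝ) : ℕ :=
  sInf {r : ℕ | ∃ u : Fin r → α → ℝ, ∃ v : Fin r → β → ℝ,
    (∀ t i, 0 ≤ u t i) ∧ (∀ t j, 0 ≤ v t j) ∧ ∀ i j, A i j = ∑ t, u t i * v t j}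

private lemma nnRank_le_card {α β T : Type} [Fintype α] [Fintype β] [Fintype T]
    {A : Matrix α β ℝ} (u : T → α → ℝ) (v : T → β → ℝ)
    (hu : ∀ t i, 0 ≤ u t i) (hv : ∀ t j, 0 ≤ v t j)
    (hA : ∀ i j, A i j = ∑ t, u t i * v t j) :
    nnRank A ≤ Fintype.card T := by
  apply Nat.sInf_le
  refine ⟨fun t => u ((Fintype.equivFin T).symm t),
          fun t => v ((Fintype.equivFin T).symm t),
          fun t i => hu _ i, fun t j => hv _ j, fun i j => ?_⟩
  rw [hA i j]
  exact (Equiv.sum_comp (Fintype.equivFin T).symm fun t => u t i * v t j).symm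

private lemma nnRank_exists {α β : Type} [Fintype α] [Fintype β]
    {A : Matrix α β ℝ} (hA : ∀ i j, 0 ≤ A i j) :
    ∃ u : Fin (nnRank A) → α → ℝ, ∃ v : Fin (nnRank A) → β → ℝ,
      (∀ t i, 0 ≤ u t i) ∧ (∀ t j, 0 ≤ v t j) ∧ ∀ i j, A i j = ∑ t, u t i * v t j := by
  classical
  have hne : Set.Nonempty {r : ℕ | ∃ u : Fin r → α → ℝ, ∃ v : Fin r → β → ℝ,
      (∀ t i, 0 ≤ u t i) ∧ (∀ t j, 0 ≤ v t j) ∧ ∀ i j, A i j = ∑ t, u t i * v t j} := by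
    refine ⟨Fintype.card β, fun t i => A i ((Fintype.equivFin β).symm t),
      fun t j => if (Fintype.equivFin β).symm t = j then 1 else 0,
      fun t i => hA _ _, fun t j => by dsimp only; split <;> norm_num, fun i j => ?_⟩
    dsimp only
    rw [Equiv.sum_comp (Fintype.equivFin β).symm
      (fun j' : β => A i j' * if j' = j then 1 else 0)]
    simp
  exact Nat.sInf_mem hne


open Matrix Finset in
private lemma lower_aux {m1 m2 n1 n2 r : ℕ}
    {B : Matrix (Fin m1) (Fin n1) ℝ} {C : Matrix (Fin m1) (Fin n2) ℝ}
    {D : Matrix (Fin m2) (Fin n2) ℝ}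
    {i0 : Fin m1} {j0 : Fin n2}
    (h : nnRank (Matrix.fromCols B C) = nnRank B + 1)
    (a : Fin r → Fin m1 → ℝ) (b : Fin r → Fin m2 → ℝ)
    (c : Fin r → Fin n1 → ℝ) (d : Fin r → Fin n2 → ℝ)
    (ha0 : ∀ t i, 0 ≤ a t i) (hb0 : ∀ t i, 0 ≤ b t i)
    (hc0 : ∀ t j, 0 ≤ c t j) (hd0 : ∀ t j, 0 ≤ d t j)
    (hbc : ∀ t i j, b t i * c t j = 0)
    (had : ∀ t i j, (i, j) ≠ (i0, j0) → a t i * d t j = 0)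
    (hfB : ∀ i j, B i j = ∑ t, a t i * c t j)
    (hfC : ∀ i j, C i j = ∑ t, a t i * d t j)
    (hfD : ∀ i j, D i j = ∑ t, b t i * d t j) :
    nnRank B + nnRank (Matrix.fromRows C D) ≤ r := by
  classical
  set S : Finset (Fin r) := univ.filter (fun t => ∃ j, c t j ≠ 0) with hS
  have hcSc : ∀ t ∉ S, ∀ j, c t j = 0 := by
    intro t ht j
    simp only [hS, mem_filter, mem_univ, true_and, not_exists, not_not] at ht
    exact ht j
  have hbS : ∀ t ∈ S, ∀ i, b t i = 0 := by
    intro t ht i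
    simp only [hS, mem_filter, mem_univ, true_and] at ht
    obtain ⟨j, hj⟩ := ht
    rcases mul_eq_zero.mp (hbc t i j) with h' | h'
    · exact h'
    · exact absurd h' hj
  have hBsum : ∀ i j, B i j = ∑ t ∈ S, a t i * c t j := by
    intro i j
    rw [hfB i j]
    exact (Finset.sum_subset (subset_univ S)
      (fun t _ ht => by rw [hcSc t ht j, mul_zero])).symm
  have hBle : nnRank B ≤ S.card := by
    have key := nnRank_le_card (A := B) (T := {t // t ∈ S})
      (fun t => a t.1) (fun t => c t.1)
      (fun t i => ha0 t.1 i) (fun t j => hc0 t.1 j)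
      (fun i j => by
        rw [hBsum i j, ← Finset.sum_coe_sort S (fun t => a t i * c t j)])
    rw [Fintype.card_coe] at key; exact key
  have hcardSplit : S.card + Sᶜ.card = r := by
    have := Finset.card_add_card_compl S
    simpa using this
  have hDsum : ∀ i j, D i j = ∑ t ∈ Sᶜ, b t i * d t j := by
    intro i j
    rw [hfD i j]
    exact (Finset.sum_subset (subset_univ Sᶜ)
      (fun t _ ht => by rw [hbS t (by simpa using ht) i, zero_mul])).symm
  by_cases hP : ∃ t ∈ S, a t i0 * d t j0 ≠ 0
  · obtain ⟨ts, htsS, htsne⟩ := hP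
    have hα : 0 < a ts i0 :=
      lt_of_le_of_ne (ha0 ts i0) (fun h' => htsne (by rw [← h', zero_mul]))
    have hδ : 0 < d ts j0 :=
      lt_of_le_of_ne (hd0 ts j0) (fun h' => htsne (by rw [← h', mul_zero]))
    have hats : ∀ i, i ≠ i0 → a ts i = 0 := by
      intro i hi
      rcases mul_eq_zero.mp (had ts i j0 (by simp [hi])) with h' | h'
      · exact h'
      · exact absurd h' (ne_of_gt hδ)
    have hκ0 : (0:ℝ) ≤ ∑ t ∈ Sᶜ, a t i0 * d t j0 :=
      Finset.sum_nonneg fun t _ => mul_nonneg (ha0 _ _) (hd0 _ _)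
    have hScSum : ∀ i j, ∑ t ∈ Sᶜ, a t i * d t j
        = (if i = i0 then a ts i0 else 0) *
          (if j = j0 then (∑ t ∈ Sᶜ, a t i0 * d t j0) / a ts i0 else 0) := by
      intro i j
      by_cases hi : i = i0 <;> by_cases hj : j = j0
      · subst hi; subst hj
        rw [if_pos rfl, if_pos rfl, mul_div_cancel₀ _ (ne_of_gt hα)]
      all_goals
        rw [Finset.sum_eq_zero (fun t _ => had t i j
          (by simp only [ne_eq, Prod.mk.injEq, not_and]; tauto))]
        simp [hi, hj]
    have hfc : nnRank (Matrix.fromCols B C) ≤ S.card := by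
      have key := nnRank_le_card (A := Matrix.fromCols B C) (T := {t // t ∈ S})
        (fun t => a t.1)
        (fun t => Sum.elim (c t.1)
          (fun j => d t.1 j +
            if t.1 = ts ∧ j = j0 then (∑ s ∈ Sᶜ, a s i0 * d s j0) / a ts i0 else 0))
        (fun t i => ha0 t.1 i)
        (by
          rintro t (j | j)
          · exact hc0 t.1 j
          · dsimp only [Sum.elim_inr]
            refine add_nonneg (hd0 t.1 j) ?_
            split
            · exact div_nonneg hκ0 hα.le
            · exact le_refl 0)
        (by
          rintro i (j | j)
          · dsimp only [Sum.elim_inl]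
            rw [fromCols_apply_inl, hBsum i j,
              ← Finset.sum_coe_sort S (fun t => a t i * c t j)]
          · dsimp only [Sum.elim_inr]
            rw [fromCols_apply_inr]
            have expand : ∑ t : {t // t ∈ S},
                a t.1 i * (d t.1 j +
                  if t.1 = ts ∧ j = j0 then (∑ s ∈ Sᶜ, a s i0 * d s j0) / a ts i0 else 0)
                = (∑ t ∈ S, a t i * d t j)
                  + a ts i * (if j = j0 then (∑ s ∈ Sᶜ, a s i0 * d s j0) / a ts i0 else 0) := by
              rw [Finset.sum_congr rfl (fun t _ => mul_add (a t.1 i) _ _),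
                Finset.sum_add_distrib]
              congr 1
              · rw [← Finset.sum_coe_sort S (fun t => a t i * d t j)]
              · rw [Finset.sum_coe_sort S (fun t => a t i *
                  if t = ts ∧ j = j0 then (∑ s ∈ Sᶜ, a s i0 * d s j0) / a ts i0 else 0)]
                by_cases hj : j = j0
                · simp only [hj, and_true]
                  simp [mul_ite, mul_zero, Finset.sum_ite_eq', htsS]
                · simp [hj]
            rw [expand, hfC i j, ← Finset.sum_add_sum_compl S (fun t => a t i * d t j),
              hScSum i j]
            by_cases hi : i = i0
            · subst hi; simp
            · simp [hi, hats i hi])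
      rw [Fintype.card_coe] at key; exact key
    have hBlt : nnRank B + 1 ≤ S.card := by rw [← h]; exact hfc
    have hlam0 : (0:ℝ) ≤ ∑ t ∈ S, a t i0 * d t j0 :=
      Finset.sum_nonneg fun t _ => mul_nonneg (ha0 _ _) (hd0 _ _)
    have hSsum : ∀ i j, ∑ t ∈ S, a t i * d t j
        = (if i = i0 then (∑ t ∈ S, a t i0 * d t j0) else 0) *
          (if j = j0 then 1 else 0) := by
      intro i j
      by_cases hi : i = i0 <;> by_cases hj : j = j0
      · subst hi; subst hj; simp
      all_goals
        rw [Finset.sum_eq_zero (fun t _ => had t i j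
          (by simp only [ne_eq, Prod.mk.injEq, not_and]; tauto))]
        simp [hi, hj]
    have hfr : nnRank (Matrix.fromRows C D) ≤ Sᶜ.card + 1 := by
      have key := nnRank_le_card (A := Matrix.fromRows C D) (T := {t // t ∈ Sᶜ} ⊕ Unit)
        (Sum.elim (fun t => Sum.elim (a t.1) (b t.1))
          (fun _ => Sum.elim (fun i => if i = i0 then (∑ t ∈ S, a t i0 * d t j0) else 0)
            (fun _ => 0)))
        (Sum.elim (fun t => d t.1) (fun _ j => if j = j0 then 1 else 0))
        (by
          rintro (t | t) (i | i)
          · exact ha0 t.1 i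
          · exact hb0 t.1 i
          · dsimp only [Sum.elim_inl, Sum.elim_inr]
            split
            · exact hlam0
            · exact le_refl 0
          · simp)
        (by
          rintro (t | t) j
          · exact hd0 t.1 j
          · dsimp only [Sum.elim_inr]
            split <;> norm_num)
        (by
          rintro (i | i) j <;>
            rw [Fintype.sum_sum_type] <;>
            simp only [Sum.elim_inl, Sum.elim_inr, Fintype.sum_unique,
              fromRows_apply_inl, fromRows_apply_inr]
          · have h3 : ∑ t : {t // t ∈ Sᶜ}, a t.1 i * d t.1 j
                = ∑ t ∈ Sᶜ, a t i * d t j :=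
              Finset.sum_coe_sort Sᶜ (fun t => a t i * d t j)
            rw [h3, hfC i j, ← Finset.sum_add_sum_compl S (fun t => a t i * d t j),
              hSsum i j]
            ring
          · have h3 : ∑ t : {t // t ∈ Sᶜ}, b t.1 i * d t.1 j
                = ∑ t ∈ Sᶜ, b t i * d t j :=
              Finset.sum_coe_sort Sᶜ (fun t => b t i * d t j)
            rw [h3, ← hDsum i j]
            ring)
      have hcard : Fintype.card ({t // t ∈ Sᶜ} ⊕ Unit) = Sᶜ.card + 1 := by
        rw [Fintype.card_sum, Fintype.card_coe, Fintype.card_unit]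
      rw [hcard] at key
      exact key
    omega
  · push_neg at hP
    have hfr : nnRank (Matrix.fromRows C D) ≤ Sᶜ.card := by
      have key := nnRank_le_card (A := Matrix.fromRows C D) (T := {t // t ∈ Sᶜ})
        (fun t => Sum.elim (a t.1) (b t.1)) (fun t => d t.1)
        (by rintro t (i | i)
            · exact ha0 t.1 i
            · exact hb0 t.1 i)
        (fun t j => hd0 t.1 j)
        (by
          rintro (i | i) j <;>
            simp only [Sum.elim_inl, Sum.elim_inr, fromRows_apply_inl, fromRows_apply_inr]
          · have h3 : ∑ t : {t // t ∈ Sᶜ}, a t.1 i * d t.1 j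
                = ∑ t ∈ Sᶜ, a t i * d t j :=
              Finset.sum_coe_sort Sᶜ (fun t => a t i * d t j)
            rw [h3, hfC i j]
            refine (Finset.sum_subset (subset_univ Sᶜ) (fun t _ ht => ?_)).symm
            have htS : t ∈ S := by simpa using ht
            by_cases hij : (i, j) = (i0, j0)
            · rw [Prod.mk.injEq] at hij
              obtain ⟨hi, hj⟩ := hij
              subst hi; subst hj
              exact hP t htS
            · exact had t i j hij
          · have h3 : ∑ t : {t // t ∈ Sᶜ}, b t.1 i * d t.1 j
                = ∑ t ∈ Sᶜ, b t i * d t j :=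
              Finset.sum_coe_sort Sᶜ (fun t => b t i * d t j)
            rw [h3, ← hDsum i j])
      rw [Fintype.card_coe] at key; exact key
    omega


open Matrix Finset in
theorem stmt_2 {m1 m2 n1 n2 : ℕ}
    (B : Matrix (Fin m1) (Fin n1) ℝ) (C : Matrix (Fin m1) (Fin n2) ℝ)
    (D : Matrix (Fin m2) (Fin n2) ℝ)
    (hB : ∀ i j, 0 ≤ B i j) (hC : ∀ i j, 0 ≤ C i j) (hD : ∀ i j, 0 ≤ D i j)
    (hunit : ∃ i0 j0, C i0 j0 ≠ 0 ∧ ∀ i j, (i, j) ≠ (i0, j0) → C i j = 0)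
    (h : nnRank (Matrix.fromCols B C) = nnRank B + 1) :
    nnRank (Matrix.fromBlocks B C 0 D) = nnRank B + nnRank (Matrix.fromRows C D) := by
  classical
  obtain ⟨i0, j0, hC0, hCz⟩ := hunit
  -- upper bound
  have hub : nnRank (Matrix.fromBlocks B C 0 D) ≤ nnRank B + nnRank (Matrix.fromRows C D) := by
    obtain ⟨uB, vB, huB, hvB, hfB⟩ := nnRank_exists hB
    have hRpos : ∀ (i : Fin m1 ⊕ Fin m2) j, 0 ≤ fromRows C D i j := by
      rintro (i | i) j
      · exact hC i j
      · exact hD i j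
    obtain ⟨uR, vR, huR, hvR, hfR⟩ := nnRank_exists hRpos
    have key := nnRank_le_card
      (A := Matrix.fromBlocks B C 0 D)
      (Sum.elim (fun s => Sum.elim (uB s) (fun _ => 0)) uR)
      (Sum.elim (fun s => Sum.elim (vB s) (fun _ => 0))
        (fun s => Sum.elim (fun _ => 0) (vR s)))
      (by rintro (t | t) (i | i) <;> simp [huB, huR])
      (by rintro (t | t) (j | j) <;> simp [hvB, hvR])
      (by
        rintro (i | i) (j | j) <;>
          simp [Fintype.sum_sum_type, fromBlocks_apply₁₁, fromBlocks_apply₁₂,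
            fromBlocks_apply₂₁, fromBlocks_apply₂₂]
        · exact hfB i j
        · have := hfR (Sum.inl i) j; simpa using this
        · have := hfR (Sum.inr i) j; simpa using this)
    simpa using key
  -- lower bound
  have hlb : nnRank B + nnRank (Matrix.fromRows C D) ≤ nnRank (Matrix.fromBlocks B C 0 D) := by
    have hApos : ∀ (i : Fin m1 ⊕ Fin m2) (j : Fin n1 ⊕ Fin n2),
        0 ≤ fromBlocks B C 0 D i j := by
      rintro (i | i) (j | j)
      · exact hB i j
      · exact hC i j
      · simp
      · exact hD i j
    obtain ⟨u, v, hu, hv, hf⟩ := nnRank_exists hApos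
    have hbc : ∀ t (i : Fin m2) (j : Fin n1), u t (Sum.inr i) * v t (Sum.inl j) = 0 := by
      intro t i j
      have h0 : ∑ t, u t (Sum.inr i) * v t (Sum.inl j) = 0 := by
        have h1 := hf (Sum.inr i) (Sum.inl j)
        rw [fromBlocks_apply₂₁, Matrix.zero_apply] at h1
        exact h1.symm
      exact (Finset.sum_eq_zero_iff_of_nonneg
        (fun s _ => mul_nonneg (hu s _) (hv s _))).mp h0 t (mem_univ t)
    have had : ∀ t (i : Fin m1) (j : Fin n2), (i, j) ≠ (i0, j0) →
        u t (Sum.inl i) * v t (Sum.inr j) = 0 := by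
      intro t i j hij
      have h0 : ∑ t, u t (Sum.inl i) * v t (Sum.inr j) = 0 := by
        have h1 := hf (Sum.inl i) (Sum.inr j)
        rw [fromBlocks_apply₁₂, hCz i j hij] at h1
        exact h1.symm
      exact (Finset.sum_eq_zero_iff_of_nonneg
        (fun s _ => mul_nonneg (hu s _) (hv s _))).mp h0 t (mem_univ t)
    exact lower_aux h
      (fun t i => u t (Sum.inl i)) (fun t i => u t (Sum.inr i))
      (fun t j => v t (Sum.inl j)) (fun t j => v t (Sum.inr j))
      (fun t i => hu t _) (fun t i => hu t _) (fun t j => hv t _) (fun t j => hv t _)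
      hbc had
      (fun i j => by have := hf (Sum.inl i) (Sum.inl j);
                     rwa [fromBlocks_apply₁₁] at this)
      (fun i j => by have := hf (Sum.inl i) (Sum.inr j);
                     rwa [fromBlocks_apply₁₂] at this)
      (fun i j => by have := hf (Sum.inr i) (Sum.inr j);
                     rwa [fromBlocks_apply₂₂] at this)
  exact le_antisymm hub hlb
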